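/- Let V₁, …, V_d be C¹ vector fields on ℝ^e, let f, h : [0,T] → ℝ^d be C¹ paths, let y : [0,T] → ℝ^e be a solution of the controlled ODE dy = Σᵢ Vᵢ(y) df^i started at y₀, let Φ : [0,T] → L(ℝ^e, ℝ^e) be a differentiable path with Φ(0) = id and Φ′(t) = (Σ_{i=1}^d (f^i)′(t) (DVᵢ)(y(t))) ∘ Φ(t) (the forward Jacobian), and let K : [0,T] → L(ℝ^e, ℝ^e) be a differentiable path with K(0) = id and K′(t) = −K(t) ∘ (Σ_{i=1}^d (f^i)′(t) (DVᵢ)(y(t))) (the backward Jacobian). If v : [0,T] → ℝ^e is differentiable with v(0) = 0 and v′(t) = Σ_{i=1}^d (f^i)′(t) (DVᵢ)(y(t))(v(t)) + Σ_{i=1}^d (h^i)′(t) Vᵢ(y(t)) for all t, then for every t ∈ [0,T]: v(t) = Φ(t)( ∫₀ᵗ Σ_{i=1}^d (h^i)′(s) · K(s)(Vᵢ(y(s))) ds ). -/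

import Mathlib

open Set

/-- Variation-of-constants representation of the directional derivative of the solution map
of the controlled ODE `dy = Σᵢ Vᵢ(y) dfⁱ` in the direction of a perturbation `h` of the
driving signal: `v(t) = Φ(t)(∫₀ᵗ Σᵢ (hⁱ)′(s) • K(s)(Vᵢ(y(s))) ds)`. -/
theorem stmt5 {d e : ℕ} (hd : 1 ≤ d) (he : 1 ≤ e) {T : ℝ} (hT : 0 < T)
    (V : Fin d → (Fin e → ℝ) → (Fin e → ℝ)) (hV : ∀ i, ContDiff ℝ 1 (V i))
    (f f' h h' : ℝ → Fin d → ℝ)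
    (hf : ∀ t ∈ Icc (0 : ℝ) T, HasDerivWithinAt f (f' t) (Icc 0 T) t)
    (hf' : ContinuousOn f' (Icc 0 T))
    (hh : ∀ t ∈ Icc (0 : ℝ) T, HasDerivWithinAt h (h' t) (Icc 0 T) t)
    (hh' : ContinuousOn h' (Icc 0 T))
    (y₀ : Fin e → ℝ) (y : ℝ → Fin e → ℝ) (hy0 : y 0 = y₀)
    (hy : ∀ t ∈ Icc (0 : ℝ) T,
      HasDerivWithinAt y (∑ i, f' t i • V i (y t)) (Icc 0 T) t)
    (Φ : ℝ → (Fin e → ℝ) →L[ℝ] (Fin e → ℝ))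
    (hΦ0 : Φ 0 = ContinuousLinearMap.id ℝ (Fin e → ℝ))
    (hΦ : ∀ t ∈ Icc (0 : ℝ) T,
      HasDerivWithinAt Φ ((∑ i, f' t i • fderiv ℝ (V i) (y t)).comp (Φ t)) (Icc 0 T) t)
    (K : ℝ → (Fin e → ℝ) →L[ℝ] (Fin e → ℝ))
    (hK0 : K 0 = ContinuousLinearMap.id ℝ (Fin e → ℝ))
    (hK : ∀ t ∈ Icc (0 : ℝ) T,
      HasDerivWithinAt K (-(K t).comp (∑ i, f' t i • fderiv ℝ (V i) (y t))) (Icc 0 T) t)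
    (v : ℝ → Fin e → ℝ) (hv0 : v 0 = 0)
    (hv : ∀ t ∈ Icc (0 : ℝ) T,
      HasDerivWithinAt v
        ((∑ i, f' t i • fderiv ℝ (V i) (y t)) (v t) + ∑ i, h' t i • V i (y t))
        (Icc 0 T) t) :
    ∀ t ∈ Icc (0 : ℝ) T,
      v t = Φ t (∫ s in (0 : ℝ)..t, ∑ i, h' s i • K s (V i (y s))) := by
  intro t ht
  obtain ⟨ht0, htT⟩ := ht
  -- derivative of w := K • v
  have hw : ∀ s ∈ Icc (0:ℝ) T, HasDerivWithinAt (fun s => K s (v s))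
      (∑ i, h' s i • K s (V i (y s))) (Icc 0 T) s := by
    intro s hs
    have := (hK s hs).clm_apply (hv s hs)
    refine this.congr_deriv ?_
    simp [ContinuousLinearMap.comp_apply, map_add, map_sum, map_smul]
  -- K ∘ Φ is constant = id
  have hKΦ : ∀ s ∈ Icc (0:ℝ) T, (K s).comp (Φ s) = ContinuousLinearMap.id ℝ (Fin e → ℝ) := by
    have key := constant_of_has_deriv_right_zero
      (f := fun s => (K s).comp (Φ s)) (a := (0:ℝ)) (b := T)
      (fun s hs => ((hK s hs).clm_comp (hΦ s hs)).continuousWithinAt)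
      (fun s hs => by
        have h1 : HasDerivWithinAt (fun s => (K s).comp (Φ s))
            ((-(K s).comp (∑ i, f' s i • fderiv ℝ (V i) (y s))).comp (Φ s)
              + (K s).comp ((∑ i, f' s i • fderiv ℝ (V i) (y s)).comp (Φ s)))
            (Icc 0 T) s :=
          (hK s (Ico_subset_Icc_self hs)).clm_comp (hΦ s (Ico_subset_Icc_self hs))
        have h2 : (-(K s).comp (∑ i, f' s i • fderiv ℝ (V i) (y s))).comp (Φ s)
              + (K s).comp ((∑ i, f' s i • fderiv ℝ (V i) (y s)).comp (Φ s)) = 0 := by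
          ext x; simp [ContinuousLinearMap.comp_apply]
        rw [h2] at h1
        exact h1.mono_of_mem_nhdsWithin (Icc_mem_nhdsGE_of_mem hs))
    intro s hs
    have := key s hs
    simpa [hK0, hΦ0] using this
  -- Φ ∘ K = id (finite dimension)
  have hΦK : (Φ t).comp (K t) = ContinuousLinearMap.id ℝ (Fin e → ℝ) := by
    have h1 : ((K t) : (Fin e → ℝ) →ₗ[ℝ] (Fin e → ℝ)) * ((Φ t) : (Fin e → ℝ) →ₗ[ℝ] (Fin e → ℝ)) = 1 := by
      exact LinearMap.ext fun x => DFunLike.congr_fun (hKΦ t ⟨ht0, htT⟩) x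
    have h2 := mul_eq_one_comm.mp h1
    exact ContinuousLinearMap.ext fun x => DFunLike.congr_fun h2 x
  -- continuity helpers
  have hKcont : ContinuousOn K (Icc 0 T) := fun s hs => (hK s hs).continuousWithinAt
  have hycont : ContinuousOn y (Icc 0 T) := fun s hs => (hy s hs).continuousWithinAt
  have hicc : Icc (0:ℝ) t ⊆ Icc 0 T := Icc_subset_Icc le_rfl htT
  have hintg : ContinuousOn (fun s => ∑ i, h' s i • K s (V i (y s))) (Icc 0 T) := by
    apply continuousOn_finset_sum
    intro i _
    exact ((continuous_apply i).comp_continuousOn hh').smul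
      (hKcont.clm_apply (((hV i).continuous).comp_continuousOn hycont))
  -- FTC
  have hFTC : (∫ s in (0:ℝ)..t, ∑ i, h' s i • K s (V i (y s)))
      = K t (v t) - K 0 (v 0) := by
    apply intervalIntegral.integral_eq_sub_of_hasDeriv_right_of_le ht0
    · exact fun s hs => ((hw s (hicc hs)).continuousWithinAt).mono hicc
    · intro s hs
      have hs' : s ∈ Icc (0:ℝ) T := hicc (Ioo_subset_Icc_self hs)
      exact (hw s hs').mono_of_mem_nhdsWithin
        (nhdsWithin_mono s (Ioi_subset_Ici le_rfl) (Icc_mem_nhdsGE_of_mem ⟨hs'.1, lt_of_lt_of_le hs.2 htT⟩))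
    · exact (hintg.mono (fun x hx => by
        rw [uIcc_of_le ht0] at hx; exact hicc hx)).intervalIntegrable
  rw [hFTC, hv0, map_zero, sub_zero]
  have := DFunLike.congr_fun hΦK (v t)
  simp only [ContinuousLinearMap.comp_apply, ContinuousLinearMap.id_apply] at this
  exact this.symm
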